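/- arXiv:2208.06799 — 2 statements merged into one kernel-verified Lean document; each statement's English description precedes it below -/
import Mathlib

section
/- Let U and V be Hilbert C*-modules over a unital C*-algebra A and let T : U → V be an adjointable operator. Then T is surjective if and only if its adjoint T* is bounded below with respect to the norm, i.e., there exists m > 0 such that ‖T*g‖ ≥ m‖g‖ for all g ∈ V. -/
open MeasureTheory CStarModule
open scoped RightActions

/-- The Hilbert C*-module class as it stood in the older Mathlib (right `Aᵐᵒᵖ`-action). -/
class RightCStarModule (A E : Type*) [NonUnitalSemiring A] [StarRing A] [Module ℂ A]
    [AddCommGroup E] [Module ℂ E] [PartialOrder A] [SMul Aᵐᵒᵖ E] [Norm A] [Norm E]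
    extends Inner A E where
  inner_add_right {x} {y} {z} : inner x (y + z) = inner x y + inner x z
  inner_self_nonneg {x} : 0 ≤ inner x x
  inner_self {x} : inner x x = 0 ↔ x = 0
  inner_op_smul_right {a : A} {x y : E} : inner x (y <• a) = inner x y * a
  inner_smul_right_complex {z : ℂ} {x} {y} : inner x (z • y) = z • inner x y
  star_inner x y : star (inner x y) = inner y x
  norm_eq_sqrt_norm_inner_self x : ‖x‖ = √‖inner x x‖

variable {A : Type*} [CStarAlgebra A] [PartialOrder A] [StarOrderedRing A]
variable {U : Type*} [NormedAddCommGroup U] [NormedSpace ℂ U] [CompleteSpace U]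
  [SMul Aᵐᵒᵖ U] [RightCStarModule A U]
variable {Ω : Type*} [MeasurableSpace Ω]

local notation "⟪" x ", " y "⟫" => (inner A x y : A)

/-- `F : Ω → U` is a continuous frame for the Hilbert C*-module `U` with bounds `A₀`, `B`. -/
def IsContinuousFrame (μ : Measure Ω) (F : Ω → U) (A₀ B : ℝ) : Prop :=
  0 < A₀ ∧ 0 < B ∧
  (∀ f : U, StronglyMeasurable fun ω => (inner A f (F ω) : A)) ∧
  (∀ f : U, Integrable (fun ω => (inner A f (F ω) : A) * inner A (F ω) f) μ) ∧
  ∀ f : U, A₀ • (inner A f f : A) ≤ (∫ ω, (inner A f (F ω) : A) * inner A (F ω) f ∂μ) ∧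
    (∫ ω, (inner A f (F ω) : A) * inner A (F ω) f ∂μ) ≤ B • (inner A f f : A)

/-- `F : Ω → U` is a continuous Bessel mapping with bound `B`. -/
def IsBessel (μ : Measure Ω) (F : Ω → U) (B : ℝ) : Prop :=
  0 < B ∧
  (∀ f : U, StronglyMeasurable fun ω => (inner A f (F ω) : A)) ∧
  (∀ f : U, Integrable (fun ω => (inner A f (F ω) : A) * inner A (F ω) f) μ) ∧
  ∀ f : U, (∫ ω, (inner A f (F ω) : A) * inner A (F ω) f ∂μ) ≤ B • (inner A f f : A)

/-- `φ : Ω → A` belongs to the Hilbert `A`-module `L²(Ω, A)`. -/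
def MemL2 (μ : Measure Ω) (φ : Ω → A) : Prop :=
  AEStronglyMeasurable φ μ ∧ Integrable (fun ω => star (φ ω) * φ ω) μ

/-- `G` is a dual of the continuous Bessel mapping `F` (weak reconstruction formula). -/
def IsDual (μ : Measure Ω) (F G : Ω → U) : Prop :=
  (∃ B : ℝ, IsBessel (A := A) μ G B) ∧
  ∀ f g : U, (inner A f g : A) = ∫ ω, (inner A f (G ω) : A) * inner A (F ω) g ∂μ

set_option linter.unusedSectionVars false

/-- A type synonym used to transfer Mathlib's C*-module lemmas. -/
def RCMSyn (E : Type*) := E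

namespace RCM

variable {E : Type*} [NormedAddCommGroup E] [NormedSpace ℂ E] [SMul Aᵐᵒᵖ E] [RightCStarModule A E]

lemma inner_add_left {x y z : E} : inner A (x + y) z = inner A x z + inner A y z := by
  rw [← RightCStarModule.star_inner (A := A) z, RightCStarModule.inner_add_right, star_add,
    RightCStarModule.star_inner, RightCStarModule.star_inner]

lemma inner_sub_right {x y z : E} : inner A x (y - z) = inner A x y - inner A x z := by
  have h := RightCStarModule.inner_add_right (A := A) (x := x) (y := y - z) (z := z)
  rw [sub_add_cancel] at h
  exact eq_sub_of_add_eq h.symm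

lemma inner_sub_left {x y z : E} : inner A (x - y) z = inner A x z - inner A y z := by
  have h := inner_add_left (A := A) (x := x - y) (y := y) (z := z)
  rw [sub_add_cancel] at h
  exact eq_sub_of_add_eq h.symm

lemma inner_smul_left_complex {c : ℂ} {x y : E} : inner A (c • x) y = star c • inner A x y := by
  rw [← RightCStarModule.star_inner (A := A) y, RightCStarModule.inner_smul_right_complex,
    star_smul, RightCStarModule.star_inner]

lemma inner_smul_left_real {r : ℝ} {x y : E} : inner A (r • x) y = r • inner A x y := by
  have h₁ : r • x = (r : ℂ) • x := by simp
  rw [h₁, inner_smul_left_complex]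
  simp

lemma inner_smul_right_real {r : ℝ} {x y : E} : inner A x (r • y) = r • inner A x y := by
  have h₁ : r • y = (r : ℂ) • y := by simp
  rw [h₁, RightCStarModule.inner_smul_right_complex]
  simp

lemma norm_sq_eq {x : E} : ‖x‖ ^ 2 = ‖inner A x x‖ := by
  rw [RightCStarModule.norm_eq_sqrt_norm_inner_self (A := A) x, Real.sq_sqrt (norm_nonneg _)]

instance : AddCommGroup (RCMSyn E) := inferInstanceAs (AddCommGroup E)

instance : Module ℂ (RCMSyn E) := show Module ℂ E from Module.compHom E (starRingEnd ℂ)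

instance : Norm (RCMSyn E) := ⟨fun x : E => ‖x‖⟩

instance : SMul A (RCMSyn E) := ⟨fun a (x : E) => (x <• star a : E)⟩

lemma syn_op (a : A) (x y : E) : inner A (y <• star a) x = a * inner A y x := by
  rw [← RightCStarModule.star_inner (A := A) x, RightCStarModule.inner_op_smul_right,
    star_mul, star_star, RightCStarModule.star_inner]

lemma syn_cplx (c : ℂ) (x y : E) : inner A ((starRingEnd ℂ) c • y) x = c • inner A y x := by
  rw [inner_smul_left_complex]
  simp

instance : Inner A (RCMSyn E) := ⟨fun x y => inner A (show E from y) (show E from x)⟩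

instance : CStarModule A (RCMSyn E) where
  inner_add_right {x y z} := inner_add_left (A := A) (E := E) (x := y) (y := z) (z := x)
  inner_self_nonneg {x} := RightCStarModule.inner_self_nonneg (A := A) (E := E) (x := x)
  inner_self {x} := RightCStarModule.inner_self (A := A) (E := E) (x := x)
  inner_op_smul_right {a x y} := syn_op (A := A) (E := E) a x y
  inner_smul_right_complex {c x y} := syn_cplx (A := A) (E := E) c x y
  star_inner x y := RightCStarModule.star_inner (A := A) (E := E) y x
  norm_eq_sqrt_norm_inner_self x :=
    RightCStarModule.norm_eq_sqrt_norm_inner_self (A := A) (E := E) x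

variable (E) in
lemma norm_inner_le {x y : E} : ‖inner A x y‖ ≤ ‖x‖ * ‖y‖ := by
  have h := CStarModule.norm_inner_le (A := A) (RCMSyn E) (x := (y : RCMSyn E)) (y := (x : RCMSyn E))
  rw [mul_comm]
  exact h

lemma continuous_inner_left (g : E) : Continuous fun x : E => inner A x g :=
  AddMonoidHomClass.continuous_of_bound
    (AddMonoidHom.mk' (fun x : E => inner A x g) (fun _ _ => inner_add_left)) ‖g‖
    (fun x => by rw [mul_comm]; exact norm_inner_le E)

lemma continuous_inner_right (g : E) : Continuous fun x : E => inner A g x :=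
  AddMonoidHomClass.continuous_of_bound
    (AddMonoidHom.mk' (fun x : E => inner A g x) (fun _ _ => RightCStarModule.inner_add_right))
    ‖g‖ (fun x => norm_inner_le E)

end RCM


section AuxFrame

variable {V : Type*} [NormedAddCommGroup V] [NormedSpace ℂ V] [CompleteSpace V]
  [SMul Aᵐᵒᵖ V] [RightCStarModule A V]

private lemma aux_ext_left {x y : V} (h : ∀ g : V, ⟪x, g⟫ = ⟪y, g⟫) : x = y := by
  have h2 : ⟪x - y, x - y⟫ = 0 := by
    rw [RCM.inner_sub_left, h (x - y), sub_self]
  rwa [RightCStarModule.inner_self, sub_eq_zero] at h2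

private lemma aux_ext_right {x y : V} (h : ∀ g : V, ⟪g, x⟫ = ⟪g, y⟫) : x = y := by
  have h2 : ⟪x - y, x - y⟫ = 0 := by
    rw [RCM.inner_sub_right, h (x - y), sub_self]
  rwa [RightCStarModule.inner_self, sub_eq_zero] at h2

private lemma aux_cont_inner_left {E : Type*} [NormedAddCommGroup E] [NormedSpace ℂ E]
    [SMul Aᵐᵒᵖ E] [RightCStarModule A E] (g : E) :
    Continuous fun x : E => ⟪x, g⟫ :=
  RCM.continuous_inner_left g

variable (T : U → V) (T' : V → U)

private def auxTlin (hadj : ∀ (f : U) (g : V), ⟪T f, g⟫ = ⟪f, T' g⟫) : U →ₗ[ℂ] V where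
  toFun := T
  map_add' f f' := aux_ext_left (A := A) fun g => by
    simp only [hadj, RCM.inner_add_left]
  map_smul' c f := by
    simp only [RingHom.id_apply]
    exact aux_ext_left (A := A) fun g => by
      simp only [hadj, RCM.inner_smul_left_complex]

private def auxT'lin (hadj : ∀ (f : U) (g : V), ⟪T f, g⟫ = ⟪f, T' g⟫) : V →ₗ[ℂ] U where
  toFun := T'
  map_add' g g' := aux_ext_right (A := A) fun f => by
    simp only [RightCStarModule.inner_add_right, ← hadj]
  map_smul' c g := by
    simp only [RingHom.id_apply]
    exact aux_ext_right (A := A) fun f => by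
      simp only [RightCStarModule.inner_smul_right_complex, ← hadj]

private lemma auxT_cont (hadj : ∀ (f : U) (g : V), ⟪T f, g⟫ = ⟪f, T' g⟫) :
    Continuous T := by
  have h := (auxTlin T T' hadj).continuous_of_seq_closed_graph (fun u x y hu hTu => by
    refine aux_ext_left (A := A) fun g => ?_
    have h1 : Filter.Tendsto (fun n => ⟪T (u n), g⟫) Filter.atTop (nhds ⟪y, g⟫) :=
      ((aux_cont_inner_left g).tendsto y).comp hTu
    have h2 : Filter.Tendsto (fun n => ⟪T (u n), g⟫) Filter.atTop (nhds ⟪T x, g⟫) := by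
      have h3 : Filter.Tendsto (fun n => ⟪u n, T' g⟫) Filter.atTop (nhds ⟪x, T' g⟫) :=
        ((aux_cont_inner_left (T' g)).tendsto x).comp hu
      simpa only [hadj] using h3
    exact tendsto_nhds_unique h1 h2)
  exact h

private lemma auxT'_cont (hadj : ∀ (f : U) (g : V), ⟪T f, g⟫ = ⟪f, T' g⟫) :
    Continuous T' := by
  have h := (auxT'lin T T' hadj).continuous_of_seq_closed_graph (fun u x y hu hTu => by
    refine aux_ext_right (A := A) fun f => ?_
    have h1 : Filter.Tendsto (fun n => ⟪f, T' (u n)⟫) Filter.atTop (nhds ⟪f, y⟫) := by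
      have := (RCM.continuous_inner_right f : Continuous fun x : U => ⟪f, x⟫)
      exact (this.tendsto y).comp hTu
    have h2 : Filter.Tendsto (fun n => ⟪f, T' (u n)⟫) Filter.atTop (nhds ⟪f, T' x⟫) := by
      have hc : Continuous fun x : V => ⟪T f, x⟫ := RCM.continuous_inner_right (T f)
      have h3 : Filter.Tendsto (fun n => ⟪T f, u n⟫) Filter.atTop (nhds ⟪T f, x⟫) :=
        (hc.tendsto x).comp hu
      simpa only [hadj] using h3
    exact tendsto_nhds_unique h1 h2)
  exact h

end AuxFrame

set_option maxHeartbeats 1000000 in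
/-- An adjointable map between Hilbert C*-modules is surjective iff its adjoint is
bounded below with respect to the norm. -/
theorem surjective_iff_adjoint_bounded_below
    {V : Type*} [NormedAddCommGroup V] [NormedSpace ℂ V] [CompleteSpace V]
    [SMul Aᵐᵒᵖ V] [RightCStarModule A V]
    (T : U → V) (T' : V → U)
    (hadj : ∀ (f : U) (g : V), (inner A (T f) g : A) = inner A f (T' g)) :
    Function.Surjective T ↔ ∃ m > (0 : ℝ), ∀ g : V, m * ‖g‖ ≤ ‖T' g‖ := by
  set DT : U →L[ℂ] V := ⟨auxTlin T T' hadj, auxT_cont T T' hadj⟩ with hDT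
  set DT' : V →L[ℂ] U := ⟨auxT'lin T T' hadj, auxT'_cont T T' hadj⟩ with hDT'
  set Q : V →L[ℂ] V := DT.comp DT' with hQdef
  have hQ : ∀ g : V, Q g = T (T' g) := fun g => rfl
  have hQpos : ∀ g : V, (0 : A) ≤ ⟪Q g, g⟫ := fun g => by
    rw [hQ, hadj]
    exact RightCStarModule.inner_self_nonneg
  -- lower bound for Q + s • 1
  have hbound : ∀ s : ℝ, 0 ≤ s → ∀ g : V, s * ‖g‖ ≤ ‖(Q + s • (1 : V →L[ℂ] V)) g‖ := by
    intro s hs g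
    rcases eq_or_ne g 0 with rfl | hg
    · simp
    · have hgpos : (0 : ℝ) < ‖g‖ := norm_pos_iff.mpr hg
      have happly : (Q + s • (1 : V →L[ℂ] V)) g = Q g + s • g := by
        simp [ContinuousLinearMap.add_apply]
      have h2 : (0 : A) ≤ s • ⟪g, g⟫ := by
        have he : s • ⟪g, g⟫ = ⟪(Real.sqrt s) • g, (Real.sqrt s) • g⟫ := by
          rw [RCM.inner_smul_left_real, RCM.inner_smul_right_real,
            smul_smul, Real.mul_self_sqrt hs]
        rw [he]
        exact RightCStarModule.inner_self_nonneg
      have h1 : s • ⟪g, g⟫ ≤ ⟪Q g + s • g, g⟫ := by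
        rw [RCM.inner_add_left, RCM.inner_smul_left_real]
        exact le_add_of_nonneg_left (hQpos g)
      have h3 : ‖s • ⟪g, g⟫‖ ≤ ‖⟪Q g + s • g, g⟫‖ :=
        CStarAlgebra.norm_le_norm_of_nonneg_of_le h2 h1
      have h4 : ‖⟪Q g + s • g, g⟫‖ ≤ ‖Q g + s • g‖ * ‖g‖ := RCM.norm_inner_le V
      have h5 : ‖s • ⟪g, g⟫‖ = s * (‖g‖ * ‖g‖) := by
        rw [norm_smul, Real.norm_eq_abs, abs_of_nonneg hs]
        congr 1
        rw [← pow_two, RCM.norm_sq_eq (A := A)]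
      rw [happly]
      have h6 : (s * ‖g‖) * ‖g‖ ≤ ‖Q g + s • g‖ * ‖g‖ := by
        calc (s * ‖g‖) * ‖g‖ = s * (‖g‖ * ‖g‖) := by ring
          _ = ‖s • ⟪g, g⟫‖ := h5.symm
          _ ≤ ‖⟪Q g + s • g, g⟫‖ := h3
          _ ≤ ‖Q g + s • g‖ * ‖g‖ := h4
      exact le_of_mul_le_mul_right h6 hgpos
  -- invertibility of a nearby operator
  have nearby : ∀ (u v : V →L[ℂ] V) (c : ℝ), 0 < c → IsUnit u →
      (∀ g : V, c * ‖g‖ ≤ ‖u g‖) → ‖v - u‖ < c → IsUnit v := by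
    intro u v c hc hu hlow hnear
    rcases subsingleton_or_nontrivial V with hS | hS
    · exact ⟨⟨v, v, by ext g; exact Subsingleton.elim _ _, by ext g; exact Subsingleton.elim _ _⟩, rfl⟩
    · set w : V →L[ℂ] V := ↑hu.unit⁻¹ with hw
      have huw : ∀ g : V, u (w g) = g := by
        intro g
        have h1 : ((hu.unit : V →L[ℂ] V) * w) g = u (w g) := by
          rw [ContinuousLinearMap.mul_apply, IsUnit.unit_spec]
        rw [← h1, hu.unit.mul_inv]
        rfl
      have hw0 : w ≠ 0 := by
        intro h0
        obtain ⟨g, hg⟩ := exists_ne (0 : V)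
        apply hg
        have := huw g
        rw [h0] at this
        simpa using this.symm
      have hwle : ‖w‖ ≤ c⁻¹ := by
        refine ContinuousLinearMap.opNorm_le_bound _ (by positivity) fun g => ?_
        have h1 := hlow (w g)
        rw [huw g] at h1
        calc ‖w g‖ = c⁻¹ * (c * ‖w g‖) := by field_simp
          _ ≤ c⁻¹ * ‖g‖ := by
              exact mul_le_mul_of_nonneg_left h1 (by positivity)
      have hwpos : (0 : ℝ) < ‖w‖ := norm_pos_iff.mpr hw0
      have hcw : c ≤ ‖w‖⁻¹ := by
        rw [le_inv_comm₀ hc hwpos]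
        exact hwle
      have hfinal : ‖v - ↑hu.unit‖ < ‖(↑hu.unit⁻¹ : V →L[ℂ] V)‖⁻¹ := by
        rw [IsUnit.unit_spec]
        exact lt_of_lt_of_le hnear hcw
      exact (Units.ofNearby hu.unit v hfinal).isUnit
  -- base case : s > ‖Q‖
  have base : ∀ s : ℝ, ‖Q‖ < s → IsUnit (Q + s • (1 : V →L[ℂ] V)) := by
    intro s hs
    have hs0 : (0 : ℝ) < s := lt_of_le_of_lt (norm_nonneg Q) hs
    have h1 : ‖-(s⁻¹ • Q)‖ < 1 := by
      rw [norm_neg]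
      have hb : ‖s⁻¹ • Q‖ ≤ s⁻¹ * ‖Q‖ := by
        refine ContinuousLinearMap.opNorm_le_bound _ (by positivity) fun g => ?_
        rw [ContinuousLinearMap.smul_apply, norm_smul, Real.norm_eq_abs,
          abs_of_nonneg (by positivity), mul_assoc]
        exact mul_le_mul_of_nonneg_left (Q.le_opNorm g) (by positivity)
      have hb2 : s⁻¹ * ‖Q‖ < 1 := by
        rw [inv_mul_eq_div]
        exact (div_lt_one hs0).mpr hs
      exact lt_of_le_of_lt hb hb2
    have u1 : IsUnit ((1 : V →L[ℂ] V) - (-(s⁻¹ • Q))) := (Units.oneSub _ h1).isUnit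
    have u2 : IsUnit (s • (1 : V →L[ℂ] V)) := by
      refine ⟨⟨s • (1 : V →L[ℂ] V), s⁻¹ • (1 : V →L[ℂ] V), ?_, ?_⟩, rfl⟩
      · ext g
        simp [smul_smul, mul_inv_cancel₀ (ne_of_gt hs0), inv_mul_cancel₀ (ne_of_gt hs0)]
      · ext g
        simp [smul_smul, mul_inv_cancel₀ (ne_of_gt hs0), inv_mul_cancel₀ (ne_of_gt hs0)]
    have h3 : Q + s • (1 : V →L[ℂ] V)
        = (s • (1 : V →L[ℂ] V)) * ((1 : V →L[ℂ] V) - (-(s⁻¹ • Q))) := by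
      ext g
      simp only [sub_neg_eq_add, ContinuousLinearMap.add_apply, ContinuousLinearMap.mul_apply,
        ContinuousLinearMap.smul_apply, ContinuousLinearMap.one_apply, smul_add, smul_smul,
        mul_inv_cancel₀ (ne_of_gt hs0), one_smul]
      abel
    rw [h3]
    exact u2.mul u1
  -- all s > 0
  have main : ∀ s : ℝ, 0 < s → IsUnit (Q + s • (1 : V →L[ℂ] V)) := by
    have step : ∀ n : ℕ, ∀ s : ℝ, (‖Q‖ + 1) * (2⁻¹ : ℝ) ^ n ≤ s →
        IsUnit (Q + s • (1 : V →L[ℂ] V)) := by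
      intro n
      induction n with
      | zero =>
        intro s hs
        refine base s ?_
        simp only [pow_zero, mul_one] at hs
        linarith
      | succ n ih =>
        intro s hs
        have hQ1 : (0 : ℝ) < ‖Q‖ + 1 := by positivity
        have hspos : (0 : ℝ) < s := lt_of_lt_of_le (by positivity) hs
        rcases le_or_gt ((‖Q‖ + 1) * (2⁻¹ : ℝ) ^ n) s with hle | hlt
        · exact ih s hle
        · set t : ℝ := (‖Q‖ + 1) * (2⁻¹ : ℝ) ^ n with ht
          have htpos : (0 : ℝ) < t := by positivity
          have hut : IsUnit (Q + t • (1 : V →L[ℂ] V)) := ih t le_rfl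
          refine nearby (Q + t • (1 : V →L[ℂ] V)) (Q + s • (1 : V →L[ℂ] V)) t htpos hut
            (hbound t (le_of_lt htpos)) ?_
          have hd : (Q + s • (1 : V →L[ℂ] V)) - (Q + t • (1 : V →L[ℂ] V))
              = (s - t) • (1 : V →L[ℂ] V) := by
            ext g
            simp only [ContinuousLinearMap.sub_apply, ContinuousLinearMap.add_apply,
              ContinuousLinearMap.smul_apply, ContinuousLinearMap.one_apply, sub_smul]
            abel
          rw [hd]
          have hnorm : ‖(s - t) • (1 : V →L[ℂ] V)‖ ≤ t - s := by
            refine ContinuousLinearMap.opNorm_le_bound _ (by linarith) fun g => ?_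
            rw [ContinuousLinearMap.smul_apply, ContinuousLinearMap.one_apply, norm_smul,
              Real.norm_eq_abs, abs_of_nonpos (by linarith), neg_sub]
          exact lt_of_le_of_lt hnorm (by linarith)
    intro s hs
    obtain ⟨n, hn⟩ : ∃ n : ℕ, (2⁻¹ : ℝ) ^ n < s / (‖Q‖ + 1) := by
      refine exists_pow_lt_of_lt_one (by positivity) (by norm_num)
    refine step n s ?_
    have hQ1 : (0 : ℝ) < ‖Q‖ + 1 := by positivity
    calc (‖Q‖ + 1) * (2⁻¹ : ℝ) ^ n ≤ (‖Q‖ + 1) * (s / (‖Q‖ + 1)) := by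
          exact mul_le_mul_of_nonneg_left (le_of_lt hn) (le_of_lt hQ1)
      _ = s := by field_simp
  constructor
  · -- surjective → bounded below
    intro hsurj
    obtain ⟨C, hC, h⟩ := ContinuousLinearMap.exists_preimage_norm_le DT
      (show Function.Surjective ⇑DT from hsurj)
    refine ⟨1 / C, by positivity, fun g => ?_⟩
    obtain ⟨f, hf, hfn⟩ := h g
    rcases eq_or_ne g 0 with rfl | hg
    · simp
    · have hgpos : (0 : ℝ) < ‖g‖ := norm_pos_iff.mpr hg
      have h1 : ‖g‖ * ‖g‖ = ‖⟪T f, g⟫‖ := by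
        have : T f = g := hf
        rw [this, ← pow_two, RCM.norm_sq_eq (A := A)]
      have h2 : ‖⟪T f, g⟫‖ ≤ ‖f‖ * ‖T' g‖ := by
        rw [hadj]
        exact RCM.norm_inner_le U
      have h4 : ‖g‖ * ‖g‖ ≤ (C * ‖g‖) * ‖T' g‖ := by
        calc ‖g‖ * ‖g‖ = ‖⟪T f, g⟫‖ := h1
          _ ≤ ‖f‖ * ‖T' g‖ := h2
          _ ≤ (C * ‖g‖) * ‖T' g‖ :=
              mul_le_mul_of_nonneg_right hfn (norm_nonneg _)
      rw [div_mul_eq_mul_div, one_mul, div_le_iff₀ hC]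
      have h5 : ‖g‖ * ‖g‖ ≤ (‖T' g‖ * C) * ‖g‖ := by nlinarith
      exact le_of_mul_le_mul_right h5 hgpos
  · -- bounded below → surjective
    rintro ⟨m, hm, hlow⟩
    have hQlow : ∀ g : V, (m * m) * ‖g‖ ≤ ‖Q g‖ := by
      intro g
      rcases eq_or_ne g 0 with rfl | hg
      · simp
      · have hgpos : (0 : ℝ) < ‖g‖ := norm_pos_iff.mpr hg
        have h1 : ‖T' g‖ ^ 2 = ‖⟪Q g, g⟫‖ := by
          rw [RCM.norm_sq_eq (A := A)]
          congr 1
          rw [hQ, hadj]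
        have h2 : ‖⟪Q g, g⟫‖ ≤ ‖Q g‖ * ‖g‖ := RCM.norm_inner_le V
        have h3 : m * ‖g‖ ≤ ‖T' g‖ := hlow g
        rw [pow_two] at h1
        have h7 : (m * ‖g‖) * (m * ‖g‖) ≤ ‖T' g‖ * ‖T' g‖ :=
          mul_le_mul h3 h3 (by positivity) (norm_nonneg _)
        have h6 : ((m * m) * ‖g‖) * ‖g‖ ≤ ‖Q g‖ * ‖g‖ := by nlinarith
        exact le_of_mul_le_mul_right h6 hgpos
    set s : ℝ := m * m / 3 with hsdef
    have hs : (0 : ℝ) < s := by positivity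
    have hu := main s hs
    have hlow2 : ∀ g : V, (m * m - s) * ‖g‖ ≤ ‖(Q + s • (1 : V →L[ℂ] V)) g‖ := by
      intro g
      have happly : (Q + s • (1 : V →L[ℂ] V)) g = Q g + s • g := by
        simp [ContinuousLinearMap.add_apply]
      rw [happly]
      have h1 : ‖Q g‖ ≤ ‖Q g + s • g‖ + ‖s • g‖ := by
        calc ‖Q g‖ = ‖(Q g + s • g) - s • g‖ := by rw [add_sub_cancel_right]
          _ ≤ ‖Q g + s • g‖ + ‖s • g‖ := norm_sub_le _ _
      have h2 : ‖s • g‖ = s * ‖g‖ := by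
        rw [norm_smul, Real.norm_eq_abs, abs_of_nonneg (le_of_lt hs)]
      have := hQlow g
      nlinarith [norm_nonneg g]
    have hQunit : IsUnit Q := by
      refine nearby (Q + s • (1 : V →L[ℂ] V)) Q (m * m - s) (by rw [hsdef]; nlinarith [mul_pos hm hm]) hu hlow2 ?_
      have hd : Q - (Q + s • (1 : V →L[ℂ] V)) = (-s) • (1 : V →L[ℂ] V) := by
        rw [sub_add_cancel_left, neg_smul]
      rw [hd]
      have hmm : (0 : ℝ) < m * m := mul_pos hm hm
      have hnorm : ‖(-s) • (1 : V →L[ℂ] V)‖ ≤ s := by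
        refine ContinuousLinearMap.opNorm_le_bound _ (le_of_lt hs) fun g => ?_
        rw [ContinuousLinearMap.smul_apply, ContinuousLinearMap.one_apply, norm_smul,
          Real.norm_eq_abs, abs_neg, abs_of_nonneg (le_of_lt hs)]
      refine lt_of_le_of_lt hnorm ?_
      rw [hsdef]
      linarith
    obtain ⟨u, huQ⟩ := hQunit
    intro g
    refine ⟨T' ((↑u⁻¹ : V →L[ℂ] V) g), ?_⟩
    have h1 : T (T' ((↑u⁻¹ : V →L[ℂ] V) g)) = Q ((↑u⁻¹ : V →L[ℂ] V) g) := (hQ _).symm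
    rw [h1, ← huQ, ← ContinuousLinearMap.mul_apply, u.mul_inv, ContinuousLinearMap.one_apply]
end

section
/- Let U be a Hilbert C*-module over a unital C*-algebra A and F : Ω → U weakly measurable. Then F is a continuous Bessel mapping (i.e., ∫_Ω ⟨f,F(ω)⟩⟨F(ω),f⟩ dμ(ω) ≤ B⟨f,f⟩ for some B > 0 and all f) if and only if there exists D > 0 such that ‖∫_Ω ⟨f,F(ω)⟩⟨F(ω),f⟩ dμ(ω)‖ ≤ D‖⟨f,f⟩‖ for all f ∈ U. -/
open MeasureTheory CStarModule
open scoped RightActions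

variable {A : Type*} [CStarAlgebra A] [PartialOrder A] [StarOrderedRing A]
variable {U : Type*} [NormedAddCommGroup U] [NormedSpace ℂ U] [CompleteSpace U]
  [SMul Aᵐᵒᵖ U] [RightCStarModule A U]
variable {Ω : Type*} [MeasurableSpace Ω]

local notation "⟪" x ", " y "⟫" => (inner A x y : A)

private lemma my_inner_op_smul_left {a : A} {x y : U} :
    ⟪x <• a, y⟫ = star a * ⟪x, y⟫ := by
  rw [← RightCStarModule.star_inner y (x <• a), RightCStarModule.inner_op_smul_right, star_mul,
    RightCStarModule.star_inner]

private lemma my_integral_nonneg {Ω : Type*} [MeasurableSpace Ω] {μ : Measure Ω} {g : Ω → A}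
    (hg : Integrable g μ) (h : ∀ ω, 0 ≤ g ω) : 0 ≤ ∫ ω, g ω ∂μ := by
  by_contra hc
  have hC : Convex ℝ {a : A | 0 ≤ a} := fun x hx y hy s t hs ht _ =>
    add_nonneg (smul_nonneg hs hx) (smul_nonneg ht hy)
  obtain ⟨φ, u, hu1, hu2⟩ := geometric_hahn_banach_point_closed hC CStarAlgebra.isClosed_nonneg hc
  have hφ : ∀ a : A, 0 ≤ a → 0 ≤ φ a := by
    intro a ha
    by_contra hneg
    push_neg at hneg
    obtain ⟨t, ht, ht'⟩ : ∃ t : ℝ, 0 < t ∧ t * φ a < u := by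
      refine ⟨max 1 ((u - 1)/ φ a), lt_max_of_lt_left one_pos, ?_⟩
      calc max 1 ((u-1)/φ a) * φ a ≤ ((u-1)/φ a) * φ a := by
            apply mul_le_mul_of_nonpos_right (le_max_right _ _) hneg.le
        _ = u - 1 := div_mul_cancel₀ _ hneg.ne
        _ < u := sub_lt_self u one_pos
    exact absurd (hu2 (t • a) (smul_nonneg ht.le ha)) (by simpa [φ.map_smul] using ht'.not_gt)
  have hu0 : u < 0 := by simpa using hu2 0 le_rfl
  have : φ (∫ ω, g ω ∂μ) = ∫ ω, φ (g ω) ∂μ := (φ.integral_comp_comm hg).symm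
  have h2 : 0 ≤ ∫ ω, φ (g ω) ∂μ := integral_nonneg fun ω => hφ _ (h ω)
  exact ((h2.trans_eq this.symm).trans_lt hu1).not_gt hu0

private lemma key_conj {Q x : A} (hQ : IsSelfAdjoint Q) (hx : 0 ≤ x) {D : ℝ} (hD : 0 < D)
    (h : ∀ a : A, 0 ≤ a → ‖a * Q * a‖ ≤ D * ‖a * x * a‖) : Q ≤ D • x := by
  rcases subsingleton_or_nontrivial A with hS | hN
  · exact le_of_eq (Subsingleton.elim _ _)
  have hspec : ∀ t ∈ spectrum ℝ x, 0 ≤ t := fun t ht => spectrum_nonneg_of_nonneg hx ht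
  have main : ∀ ε : ℝ, 0 < ε → Q ≤ (D * ε) • 1 + D • x := by
    intro ε hε
    set fe : ℝ → ℝ := fun t => Real.sqrt (ε + t)⁻¹ with hfe
    set ge : ℝ → ℝ := fun t => Real.sqrt (ε + t) with hge
    have hpos : ∀ t ∈ spectrum ℝ x, 0 < ε + t := fun t ht => by linarith [hspec t ht]
    have hcf : ContinuousOn fe (spectrum ℝ x) := by
      apply Real.continuous_sqrt.comp_continuousOn
      exact ContinuousOn.inv₀ (by fun_prop) (fun t ht => (hpos t ht).ne')
    have hcg : ContinuousOn ge (spectrum ℝ x) := by fun_prop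
    set a : A := cfc fe x with ha_def
    set b : A := cfc ge x with hb_def
    have ha : 0 ≤ a := cfc_nonneg (fun t _ => Real.sqrt_nonneg _)
    have hb : 0 ≤ b := cfc_nonneg (fun t _ => Real.sqrt_nonneg _)
    have hax : a * x * a = cfc (fun t => fe t * t * fe t) x := by
      conv_lhs => rw [← cfc_id ℝ x hx.isSelfAdjoint, ha_def]
      rw [← cfc_mul _ _ x hcf, ← cfc_mul _ _ x (by fun_prop) hcf]
      simp [id]
    have haxa : a * x * a ≤ 1 := by
      rw [hax]
      apply cfc_le_one
      intro t ht
      have h1 : fe t * t * fe t = t * (ε + t)⁻¹ := by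
        simp only [hfe]
        rw [mul_comm _ t, mul_assoc, Real.mul_self_sqrt (inv_nonneg.mpr (hpos t ht).le)]
      rw [h1, ← div_eq_mul_inv]
      exact div_le_one_of_le₀ (by linarith [hpos t ht]) (hpos t ht).le
    have has : IsSelfAdjoint a := .of_nonneg ha
    have hnorm : ‖a * x * a‖ ≤ 1 := by
      have h0 : 0 ≤ a * x * a := by simpa [has.star_eq] using star_right_conjugate_nonneg hx a
      have := CStarAlgebra.norm_le_norm_of_nonneg_of_le h0 haxa
      rwa [norm_one] at this
    have hQa : ‖a * Q * a‖ ≤ D := by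
      calc ‖a * Q * a‖ ≤ D * ‖a * x * a‖ := h a ha
        _ ≤ D * 1 := by nlinarith
        _ = D := mul_one D
    have hsa_aQa : IsSelfAdjoint (a * Q * a) := by
      simp only [IsSelfAdjoint, star_mul, hQ.star_eq, has.star_eq, star_star, mul_assoc]
    have hstep : a * Q * a ≤ D • 1 := by
      calc a * Q * a ≤ algebraMap ℝ A ‖a * Q * a‖ := hsa_aQa.le_algebraMap_norm_self
        _ ≤ D • 1 := by
          rw [Algebra.algebraMap_eq_smul_one, ← sub_nonneg, ← sub_smul]
          exact smul_nonneg (by linarith) zero_le_one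
    have hba : b * a = 1 := by
      rw [ha_def, hb_def, ← cfc_mul _ _ x hcg hcf]
      rw [show (1:A) = cfc (fun _ : ℝ => (1:ℝ)) x from (cfc_const_one ℝ x hx.isSelfAdjoint).symm]
      apply cfc_congr
      intro t ht
      simp only [hge, hfe]
      rw [← Real.sqrt_mul (hpos t ht).le, mul_inv_cancel₀ (hpos t ht).ne', Real.sqrt_one]
    have hab : a * b = 1 := by
      rw [ha_def, hb_def, ← cfc_mul _ _ x hcf hcg]
      rw [show (1:A) = cfc (fun _ : ℝ => (1:ℝ)) x from (cfc_const_one ℝ x hx.isSelfAdjoint).symm]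
      apply cfc_congr
      intro t ht
      simp only [hge, hfe]
      rw [← Real.sqrt_mul (inv_nonneg.mpr (hpos t ht).le), inv_mul_cancel₀ (hpos t ht).ne', Real.sqrt_one]
    have hbb : b * b = ε • 1 + x := by
      rw [hb_def, ← cfc_mul _ _ x hcg hcg,
        cfc_congr (g := fun t : ℝ => ε + t) (fun t ht => Real.mul_self_sqrt (hpos t ht).le),
        cfc_add x (fun _ => ε) (fun t => t) (by fun_prop) (by fun_prop),
        cfc_const _ _ hx.isSelfAdjoint, cfc_id' ℝ x hx.isSelfAdjoint,
        Algebra.algebraMap_eq_smul_one]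
    have hbs : IsSelfAdjoint b := .of_nonneg hb
    have final := star_left_conjugate_le_conjugate hstep b
    rw [hbs.star_eq] at final
    calc Q = (b * a) * Q * (a * b) := by rw [hba, hab, one_mul, mul_one]
      _ = b * (a * Q * a) * b := by noncomm_ring
      _ ≤ b * (D • 1) * b := final
      _ = D • (b * b) := by rw [mul_smul_comm, smul_mul_assoc, mul_one]
      _ = (D * ε) • 1 + D • x := by rw [hbb, smul_add, smul_smul]
  rw [← sub_nonneg]
  have htend : Filter.Tendsto (fun n : ℕ => (D * (1/(n+1))) • (1:A) + (D • x - Q))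
      Filter.atTop (nhds (D • x - Q)) := by
    have h1 : Filter.Tendsto (fun n : ℕ => (D * (1/(n+1) : ℝ))) Filter.atTop (nhds 0) := by
      simpa using (tendsto_const_nhds (x := D)).mul tendsto_one_div_add_atTop_nhds_zero_nat
    simpa using (h1.smul_const (1:A)).add_const (D • x - Q)
  refine CStarAlgebra.isClosed_nonneg.mem_of_tendsto htend (Filter.Eventually.of_forall ?_)
  intro n
  have := main (1/(n+1)) (by positivity)
  simp only [Set.mem_setOf_eq]
  rw [← sub_nonneg] at this
  convert this using 1
  abel

private lemma my_integral_conj {A : Type*} [CStarAlgebra A] {Ω : Type*} [MeasurableSpace Ω]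
    {μ : Measure Ω} (c : A) {g : Ω → A} (hg : Integrable g μ) :
    ∫ ω, c * g ω * c ∂μ = c * (∫ ω, g ω ∂μ) * c := by
  let L : A →L[ℂ] A :=
    (ContinuousLinearMap.mul ℂ A c).comp ((ContinuousLinearMap.mul ℂ A).flip c)
  have hL : ∀ y : A, L y = c * y * c := fun y => (mul_assoc c y c).symm
  calc ∫ ω, c * g ω * c ∂μ = ∫ ω, L (g ω) ∂μ := by simp_rw [hL]
    _ = L (∫ ω, g ω ∂μ) := L.integral_comp_comm hg
    _ = c * (∫ ω, g ω ∂μ) * c := hL _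

/-- A weakly measurable `F : Ω → U` is a continuous Bessel mapping iff there is `D > 0`
such that `‖∫ ⟨f,F(ω)⟩⟨F(ω),f⟩ dμ‖ ≤ D ‖⟨f,f⟩‖` for all `f`. -/
theorem bessel_iff_norm_bound (μ : Measure Ω) (F : Ω → U)
    (hmeas : ∀ f : U, StronglyMeasurable fun ω => ⟪f, F ω⟫)
    (hint : ∀ f : U, Integrable (fun ω => ⟪f, F ω⟫ * ⟪F ω, f⟫) μ) :
    (∃ B > (0 : ℝ), ∀ f : U, (∫ ω, ⟪f, F ω⟫ * ⟪F ω, f⟫ ∂μ) ≤ B • ⟪f, f⟫) ↔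
      ∃ D > (0 : ℝ), ∀ f : U, ‖∫ ω, ⟪f, F ω⟫ * ⟪F ω, f⟫ ∂μ‖ ≤ D * ‖⟪f, f⟫‖ := by
  have hpos : ∀ f : U, (0 : A) ≤ ∫ ω, ⟪f, F ω⟫ * ⟪F ω, f⟫ ∂μ := by
    intro f
    refine my_integral_nonneg (hint f) fun ω => ?_
    rw [← RightCStarModule.star_inner (F ω) f]
    exact star_mul_self_nonneg _
  constructor
  · rintro ⟨B, hB, hle⟩
    refine ⟨B, hB, fun f => ?_⟩
    calc ‖∫ ω, ⟪f, F ω⟫ * ⟪F ω, f⟫ ∂μ‖ ≤ ‖B • ⟪f, f⟫‖ :=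
          CStarAlgebra.norm_le_norm_of_nonneg_of_le (hpos f) (hle f)
      _ = B * ‖⟪f, f⟫‖ := by rw [norm_smul, Real.norm_of_nonneg hB.le]
  · rintro ⟨D, hD, hnorm⟩
    refine ⟨D, hD, fun f => ?_⟩
    refine key_conj (IsSelfAdjoint.of_nonneg (hpos f)) RightCStarModule.inner_self_nonneg hD ?_
    intro a ha
    have has : IsSelfAdjoint a := .of_nonneg ha
    have hfun : (fun ω => ⟪f <• a, F ω⟫ * ⟪F ω, f <• a⟫)
        = fun ω => a * (⟪f, F ω⟫ * ⟪F ω, f⟫) * a := by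
      funext ω
      rw [my_inner_op_smul_left, RightCStarModule.inner_op_smul_right, has.star_eq]
      noncomm_ring
    have key := hnorm (f <• a)
    rw [hfun] at key
    rw [my_integral_conj a (hint f)] at key
    rw [show ⟪f <• a, f <• a⟫ = a * ⟪f, f⟫ * a by
      rw [my_inner_op_smul_left, RightCStarModule.inner_op_smul_right, has.star_eq, mul_assoc]] at key
    exact key
end
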